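/- For the fixed-point-preserving explicit scheme X̄_{(k+1)δt} = ((X̄_{kδt}(1−ωδt) + ΔW_{k+1}/(1−ωδt))² + 2δt)^{1/2} with ΔW_{k+1} ∼ N(0, δt) independent increments, for every integer q ≥ 1 there is a constant C_q such that for all x ≥ 0 and all δt ≤ 1/(2ω), E[(X̄^x_{δt})^{2q}] ≤ e^{C_q δt}(1 + x^{2q}) − 1, where X̄^x_{δt} = ((x(1−ωδt) + W_{δt}/(1−ωδt))² + 2δt)^{1/2}. -/

import Mathlib

open MeasureTheory ProbabilityTheory Real
open scoped NNReal ENNReal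

lemma int_pow_exp (n : ℕ) {b : ℝ} (hb : 0 < b) :
    Integrable fun x : ℝ => x ^ n * Real.exp (-b * x ^ 2) := by
  have h : (-1:ℝ) < n := by
    have : (0:ℝ) ≤ n := Nat.cast_nonneg n
    linarith
  simpa [Real.rpow_natCast] using integrable_rpow_mul_exp_neg_mul_sq hb h

lemma int_pow_gauss (n : ℕ) {v : ℝ≥0} (hv : v ≠ 0) :
    Integrable (fun w : ℝ => w ^ n) (gaussianReal 0 v) := by
  rw [gaussianReal_of_var_ne_zero _ hv]
  rw [integrable_withDensity_iff (measurable_gaussianPDF _ _)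
    (Filter.Eventually.of_forall fun x => ENNReal.ofReal_lt_top)]
  have hb : 0 < ((2:ℝ) * v)⁻¹ := by positivity
  have : (fun x : ℝ => x ^ n * (gaussianPDF 0 v x).toReal)
      = fun x : ℝ => (√(2 * π * v))⁻¹ * (x ^ n * Real.exp (-((2*v:ℝ))⁻¹ * x ^ 2)) := by
    funext x
    rw [gaussianPDF, ENNReal.toReal_ofReal (gaussianPDFReal_nonneg _ _ _), gaussianPDFReal]
    have hv' : (0:ℝ) < v := by positivity
    rw [show -(x - 0)^2 / (2 * (v:ℝ)) = -((2*v:ℝ))⁻¹ * x ^ 2 by field_simp; ring]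
    ring
  rw [this]
  exact (int_pow_exp n hb).const_mul _

lemma gauss_map_neg (v : ℝ≥0) : (gaussianReal 0 v).map (fun w => -w) = gaussianReal 0 v := by
  have h := gaussianReal_map_const_mul (μ := 0) (v := v) (-1)
  norm_num at h
  exact h

lemma odd_moment (v : ℝ≥0) {m : ℕ} (hm : Odd m) :
    ∫ w, w ^ m ∂(gaussianReal 0 v) = 0 := by
  have h2 : ∫ w, w ^ m ∂(gaussianReal 0 v)
      = ∫ w, (-w) ^ m ∂(gaussianReal 0 v) := by
    conv_lhs => rw [← gauss_map_neg v]
    exact integral_map (by fun_prop) (by fun_prop)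
  simp_rw [hm.neg_pow] at h2
  rw [integral_neg] at h2
  linarith

lemma even_moment (v : ℝ≥0) (k : ℕ) :
    ∫ w, w ^ (2*k) ∂(gaussianReal 0 v)
      = (v:ℝ)^k * ∫ w, w ^ (2*k) ∂(gaussianReal 0 1) := by
  have h := gaussianReal_map_const_mul (μ := 0) (v := 1) (√v)
  norm_num at h
  have h2 : Measure.map (fun x => √(v:ℝ) * x) (gaussianReal 0 1) = gaussianReal 0 v := by
    rw [h]
  rw [← h2, integral_map (by fun_prop) (by fun_prop)]
  simp_rw [mul_pow]
  rw [integral_const_mul]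
  congr 1
  rw [pow_mul, Real.sq_sqrt (v.coe_nonneg)]

lemma even_moment_nonneg (v : ℝ≥0) (k : ℕ) : 0 ≤ ∫ w, w ^ (2*k) ∂(gaussianReal 0 v) := by
  refine integral_nonneg fun w => ?_
  rw [pow_mul]
  positivity

lemma pow_le_one_add_pow {y : ℝ} (hy : 0 ≤ y) {i n : ℕ} (h : i ≤ n) :
    y ^ i ≤ 1 + y ^ n := by
  rcases le_total y 1 with h1 | h1
  · have := pow_le_one₀ hy h1 (n := i)
    nlinarith [pow_nonneg hy n]
  · have := pow_le_pow_right₀ h1 h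
    nlinarith

lemma choose_le_two_pow' (n k : ℕ) : (n.choose k : ℝ) ≤ 2 ^ n := by
  have h : n.choose k ≤ 2 ^ n := by
    rcases le_or_gt k n with h | h
    · calc n.choose k ≤ ∑ i ∈ Finset.range (n+1), n.choose i :=
          Finset.single_le_sum (fun i _ => Nat.zero_le _)
            (Finset.mem_range.2 (Nat.lt_succ_of_le h))
      _ = 2 ^ n := Nat.sum_range_choose n
    · rw [Nat.choose_eq_zero_of_lt h]; exact Nat.zero_le _
  calc (n.choose k : ℝ) ≤ ((2^n : ℕ) : ℝ) := by exact_mod_cast h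
  _ = 2 ^ n := by push_cast; ring

set_option maxHeartbeats 2000000

/-- One-step moment bound for the positivity-preserving explicit scheme
`X̄^x_{δt} = ((x(1−ωδt) + W_{δt}/(1−ωδt))² + 2δt)^{1/2}` with `W_{δt} ∼ N(0,δt)`:
for every `q ≥ 1` there is `C_q` such that for all `x ≥ 0` and `0 < δt ≤ 1/(2ω)`,
`E[(X̄^x_{δt})^{2q}] ≤ e^{C_q δt}(1 + x^{2q}) − 1`. -/
theorem explicit_scheme_moment_bound
    (ω₀ : ℝ) (hω : 0 < ω₀) (q : ℕ) (hq : 1 ≤ q) :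
    ∃ C : ℝ, 0 < C ∧
      ∀ x : ℝ, 0 ≤ x → ∀ δt : ℝ, 0 < δt → δt ≤ 1 / (2 * ω₀) →
        ∫ w, (((x * (1 - ω₀ * δt) + w / (1 - ω₀ * δt)) ^ 2 + 2 * δt) ^ ((1:ℝ)/2)) ^ (2 * q)
            ∂(gaussianReal 0 δt.toNNReal)
          ≤ Real.exp (C * δt) * (1 + x ^ (2 * q)) - 1 := by
  set D : ℝ := 1 / (2 * ω₀) with hD
  set E : ℝ := max 1 D with hE
  have hE1 : (1:ℝ) ≤ E := le_max_left _ _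
  have hE0 : (0:ℝ) < E := by linarith
  set S : ℝ := ∑ k ∈ Finset.range (q+1), ∫ w, w ^ (2*k) ∂(gaussianReal 0 1) with hS
  have hS0 : 0 ≤ S := Finset.sum_nonneg fun k _ => even_moment_nonneg 1 k
  set B : ℝ := 2^q * 2^q * 4^q * 4^q * E^q * E^q * (S+1) with hB
  have hB0 : 0 < B := by
    have h1 : (0:ℝ) < S + 1 := by linarith
    have h2 : (0:ℝ) < E ^ q := pow_pos hE0 q
    positivity
  set N : ℝ := ((q:ℝ)+1) * (2*(q:ℝ)+1) with hN
  have hN0 : 0 < N := by positivity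
  refine ⟨N * B + 1, by positivity, ?_⟩
  intro x hx δt hδt hδtD
  have hXnn : 0 ≤ x ^ (2*q) := pow_nonneg hx _
  have hX1 : (0:ℝ) ≤ 1 + x ^ (2*q) := by linarith
  have hδE : δt ≤ E := le_trans hδtD (le_max_right 1 D)
  have hωδ : ω₀ * δt ≤ 1/2 := by
    rw [hD, le_div_iff₀ (by positivity)] at hδtD
    nlinarith
  set c : ℝ := 1 - ω₀ * δt with hc
  have hc2 : (1:ℝ)/2 ≤ c := by rw [hc]; linarith
  have hc0 : 0 < c := by linarith
  have hc1 : c ≤ 1 := by rw [hc]; nlinarith [mul_pos hω hδt]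
  have hcinv : c⁻¹ ≤ 2 := by
    nlinarith [mul_inv_cancel₀ (ne_of_gt hc0), inv_nonneg.mpr hc0.le]
  have hcinv0 : (0:ℝ) ≤ c⁻¹ := inv_nonneg.mpr hc0.le
  set v : ℝ≥0 := δt.toNNReal with hv
  have hvne : v ≠ 0 := by
    simp only [hv, ne_eq, Real.toNNReal_eq_zero, not_le]
    exact hδt
  have hvc : (v:ℝ) = δt := Real.coe_toNNReal _ hδt.le
  -- Step A : remove the square root
  have hA : ∀ w : ℝ, (((x * c + w / c) ^ 2 + 2 * δt) ^ ((1:ℝ)/2)) ^ (2 * q)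
      = ((x * c + w / c) ^ 2 + 2 * δt) ^ q := by
    intro w
    have ht : (0:ℝ) ≤ (x * c + w / c) ^ 2 + 2 * δt := by
      nlinarith [sq_nonneg (x * c + w / c)]
    rw [← Real.rpow_natCast (((x * c + w / c) ^ 2 + 2 * δt) ^ ((1:ℝ)/2)) (2*q),
      ← Real.rpow_mul ht, show (1:ℝ)/2 * ((2*q : ℕ) : ℝ) = ((q:ℕ):ℝ) by push_cast; ring,
      Real.rpow_natCast]
  simp_rw [hA]
  -- notation
  set M : ℕ → ℝ := fun p => ∫ w, w ^ p ∂(gaussianReal 0 v) with hM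
  set coef : ℕ → ℕ → ℝ := fun j i =>
    (q.choose j : ℝ) * (2*δt)^(q-j) * (((2*j).choose i : ℝ)) * (x*c)^i * (c⁻¹)^(2*j-i)
    with hcoef
  have hexp : ∀ w : ℝ, ((x*c + w/c)^2 + 2*δt)^q
      = ∑ j ∈ Finset.range (q+1), ∑ i ∈ Finset.range (2*j+1), coef j i * w^(2*j-i) := by
    intro w
    rw [add_pow]
    refine Finset.sum_congr rfl fun j hj => ?_
    rw [← pow_mul, add_pow, Finset.sum_mul, Finset.sum_mul]
    refine Finset.sum_congr rfl fun i hi => ?_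
    simp only [hcoef]
    rw [div_eq_mul_inv, mul_pow]
    ring
  have hInt : ∀ (r : ℝ) (p : ℕ), Integrable (fun w : ℝ => r * w ^ p) (gaussianReal 0 v) :=
    fun r p => (int_pow_gauss p hvne).const_mul r
  have hstep : (∫ w, ((x*c + w/c)^2 + 2*δt)^q ∂(gaussianReal 0 v))
      = ∑ j ∈ Finset.range (q+1), ∑ i ∈ Finset.range (2*j+1), coef j i * M (2*j-i) := by
    simp_rw [hexp]
    rw [integral_finset_sum _ fun j _ => integrable_finset_sum _ fun i _ => hInt _ _]
    refine Finset.sum_congr rfl fun j _ => ?_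
    rw [integral_finset_sum _ fun i _ => hInt _ _]
    refine Finset.sum_congr rfl fun i _ => ?_
    simp only [hM]
    exact integral_const_mul _ _
  rw [hstep]
  -- moment bounds
  have hM0 : M 0 = 1 := by simp [hM]
  have hMb : ∀ p : ℕ, p ≤ 2*q →
      0 ≤ M p ∧ M p ≤ E^q * (S+1) ∧ (1 ≤ p → M p ≤ δt * (E^q * (S+1))) := by
    intro p hp
    have hEqnn : (0:ℝ) ≤ E ^ q := pow_nonneg hE0.le q
    have hS1 : (0:ℝ) ≤ S + 1 := by linarith
    rcases Nat.even_or_odd p with hpe | hpo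
    · obtain ⟨k, hk⟩ := hpe
      have hp2 : p = 2*k := by omega
      have hkq : k ≤ q := by omega
      have hMeq : M p = δt^k * (∫ w, w ^ (2*k) ∂(gaussianReal 0 1)) := by
        simp only [hM]
        rw [hp2, even_moment v k, hvc]
      have hmnn : 0 ≤ ∫ w, w ^ (2*k) ∂(gaussianReal 0 1) := even_moment_nonneg 1 k
      have hmS : (∫ w, w ^ (2*k) ∂(gaussianReal 0 1)) ≤ S + 1 := by
        have := Finset.single_le_sum (f := fun i => ∫ w, w ^ (2*i) ∂(gaussianReal 0 1))
          (fun i _ => even_moment_nonneg 1 i) (Finset.mem_range.2 (by omega : k < q + 1))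
        rw [hS]; linarith
      have hδk : δt^k ≤ E^q :=
        (pow_le_pow_left₀ hδt.le hδE k).trans (pow_le_pow_right₀ hE1 hkq)
      refine ⟨by rw [hMeq]; exact mul_nonneg (pow_nonneg hδt.le k) hmnn, ?_, ?_⟩
      · rw [hMeq]
        exact mul_le_mul hδk hmS hmnn hEqnn
      · intro hp1
        have hk1 : 1 ≤ k := by omega
        obtain ⟨k', rfl⟩ : ∃ k', k = k' + 1 := ⟨k - 1, by omega⟩
        rw [hMeq, pow_succ]
        have h1 : δt^k' ≤ E^q :=
          (pow_le_pow_left₀ hδt.le hδE k').trans (pow_le_pow_right₀ hE1 (by omega))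
        have h2 : δt^k' * (∫ w, w ^ (2*(k'+1)) ∂(gaussianReal 0 1)) ≤ E^q * (S+1) :=
          mul_le_mul h1 hmS hmnn hEqnn
        calc δt^k' * δt * (∫ w, w ^ (2*(k'+1)) ∂(gaussianReal 0 1))
            = δt * (δt^k' * (∫ w, w ^ (2*(k'+1)) ∂(gaussianReal 0 1))) := by ring
        _ ≤ δt * (E^q * (S+1)) := mul_le_mul_of_nonneg_left h2 hδt.le
    · have hMp : M p = 0 := by simp only [hM]; exact odd_moment v hpo
      rw [hMp]
      exact ⟨le_rfl, mul_nonneg hEqnn hS1,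
        fun _ => mul_nonneg hδt.le (mul_nonneg hEqnn hS1)⟩
  -- per-term bound for non-top terms
  have h4q : (0:ℝ) ≤ 4^q := by positivity
  have h2q : (0:ℝ) ≤ 2^q := by positivity
  have hEqnn : (0:ℝ) ≤ E ^ q := pow_nonneg hE0.le q
  have hS1 : (0:ℝ) ≤ S + 1 := by linarith
  have hxc0 : 0 ≤ x * c := mul_nonneg hx hc0.le
  have hT : ∀ j i : ℕ, j ≤ q → i ≤ 2*j → (j < q ∨ i < 2*q) →
      coef j i * M (2*j-i) ≤ B * δt * (1 + x^(2*q)) := by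
    intro j i hj hi hcase
    have hp : 2*j - i ≤ 2*q := by omega
    obtain ⟨hMp0, hMp1, hMp2⟩ := hMb (2*j-i) hp
    have hf1 : (q.choose j : ℝ) ≤ 2^q := choose_le_two_pow' q j
    have h24 : ((2:ℝ))^(2*q) = 4^q := by rw [pow_mul]; norm_num
    have hf3 : (((2*j).choose i : ℝ)) ≤ 4^q := by
      calc (((2*j).choose i : ℝ)) ≤ 2^(2*j) := choose_le_two_pow' _ _
      _ ≤ 2^(2*q) := pow_le_pow_right₀ one_le_two (by omega)
      _ = 4^q := h24
    have hf4 : (x*c)^i ≤ 1 + x^(2*q) := by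
      calc (x*c)^i ≤ x^i := pow_le_pow_left₀ hxc0 (mul_le_of_le_one_right hx hc1) i
      _ ≤ 1 + x^(2*q) := pow_le_one_add_pow hx (by omega)
    have hf5 : (c⁻¹)^(2*j-i) ≤ 4^q := by
      calc (c⁻¹)^(2*j-i) ≤ 2^(2*j-i) := pow_le_pow_left₀ hcinv0 hcinv _
      _ ≤ 2^(2*q) := pow_le_pow_right₀ one_le_two hp
      _ = 4^q := h24
    have hblock1 : (q.choose j : ℝ) * ((2*j).choose i : ℝ) * (x*c)^i * (c⁻¹)^(2*j-i)
        ≤ 2^q * 4^q * (1+x^(2*q)) * 4^q := by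
      have b1 : (q.choose j : ℝ) * ((2*j).choose i : ℝ) ≤ 2^q * 4^q :=
        mul_le_mul hf1 hf3 (Nat.cast_nonneg _) h2q
      have b2 : (q.choose j : ℝ) * ((2*j).choose i : ℝ) * (x*c)^i
          ≤ 2^q * 4^q * (1+x^(2*q)) :=
        mul_le_mul b1 hf4 (pow_nonneg hxc0 i) (by positivity)
      exact mul_le_mul b2 hf5 (pow_nonneg hcinv0 _)
        (mul_nonneg (mul_nonneg h2q h4q) hX1)
    have h2δ0 : (0:ℝ) ≤ (2*δt)^(q-j) := pow_nonneg (by linarith) _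
    have hblock2 : (2*δt)^(q-j) * M (2*j-i) ≤ 2^q * E^q * (E^q*(S+1)) * δt := by
      by_cases hjq : j < q
      · have h2 : (2*δt)^(q-j) ≤ 2^q * (E^q * δt) := by
          obtain ⟨k', hk'⟩ : ∃ k', q - j = k' + 1 := ⟨q - j - 1, by omega⟩
          rw [hk', mul_pow, pow_succ]
          have e1 : (2:ℝ)^(k'+1) ≤ 2^q := pow_le_pow_right₀ one_le_two (by omega)
          have e2 : δt^k' ≤ E^q :=
            (pow_le_pow_left₀ hδt.le hδE k').trans (pow_le_pow_right₀ hE1 (by omega))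
          exact mul_le_mul e1 (mul_le_mul_of_nonneg_right e2 hδt.le)
            (mul_nonneg (pow_nonneg hδt.le _) hδt.le) h2q
        calc (2*δt)^(q-j) * M (2*j-i) ≤ (2^q * (E^q * δt)) * (E^q*(S+1)) :=
            mul_le_mul h2 hMp1 hMp0
              (mul_nonneg h2q (mul_nonneg hEqnn hδt.le))
        _ = 2^q * E^q * (E^q*(S+1)) * δt := by ring
      · have hjq' : q = j := by omega
        have hi2 : i < 2*q := by
          rcases hcase with h | h
          · omega
          · exact h
        subst hjq'
        rw [Nat.sub_self, pow_zero, one_mul]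
        have hEq1 : (1:ℝ) ≤ E^q := one_le_pow₀ hE1
        have h2q1 : (1:ℝ) ≤ (2:ℝ)^q := one_le_pow₀ one_le_two
        calc M (2*q-i) ≤ δt * (E^q*(S+1)) := hMp2 (by omega)
        _ ≤ 2^q * E^q * (E^q*(S+1)) * δt := by
            have hP : (0:ℝ) ≤ δt * (E ^ q * (S + 1)) :=
              mul_nonneg hδt.le (mul_nonneg hEqnn hS1)
            have h21 : (1:ℝ) ≤ 2 ^ q * E ^ q := by nlinarith
            nlinarith [mul_le_mul_of_nonneg_right h21 hP]
      
    calc coef j i * M (2*j-i)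
        = ((q.choose j : ℝ) * ((2*j).choose i : ℝ) * (x*c)^i * (c⁻¹)^(2*j-i))
          * ((2*δt)^(q-j) * M (2*j-i)) := by simp only [hcoef]; ring
    _ ≤ (2^q * 4^q * (1+x^(2*q)) * 4^q) * (2^q * E^q * (E^q*(S+1)) * δt) :=
        mul_le_mul hblock1 hblock2 (mul_nonneg h2δ0 hMp0)
          (mul_nonneg (mul_nonneg (mul_nonneg h2q h4q) hX1) h4q)
    _ = B * δt * (1+x^(2*q)) := by rw [hB]; ring
  -- assemble
  rw [Finset.sum_range_succ, Finset.sum_range_succ]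
  have hbnd0 : 0 ≤ B * δt * (1 + x^(2*q)) := mul_nonneg (mul_nonneg hB0.le hδt.le) hX1
  have hsum1 : ∑ j ∈ Finset.range q, ∑ i ∈ Finset.range (2*j+1), coef j i * M (2*j-i)
      ≤ (q:ℝ) * ((2*(q:ℝ)+1) * (B * δt * (1 + x^(2*q)))) := by
    have h1 : ∀ j ∈ Finset.range q,
        ∑ i ∈ Finset.range (2*j+1), coef j i * M (2*j-i)
          ≤ (2*(q:ℝ)+1) * (B * δt * (1 + x^(2*q))) := by
      intro j hj
      have hjq : j < q := Finset.mem_range.1 hj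
      have h2 := Finset.sum_le_card_nsmul (Finset.range (2*j+1))
        (fun i => coef j i * M (2*j-i)) (B * δt * (1 + x^(2*q)))
        (fun i hi => hT j i hjq.le (by have := Finset.mem_range.1 hi; omega) (Or.inl hjq))
      rw [Finset.card_range, nsmul_eq_mul] at h2
      have h3 : ((2*j+1 : ℕ):ℝ) ≤ 2*(q:ℝ)+1 := by
        have : (j:ℝ) ≤ (q:ℝ) := Nat.cast_le.2 hjq.le
        push_cast
        linarith
      exact h2.trans (mul_le_mul_of_nonneg_right h3 hbnd0)
    calc ∑ j ∈ Finset.range q, ∑ i ∈ Finset.range (2*j+1), coef j i * M (2*j-i)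
        ≤ ∑ _j ∈ Finset.range q, (2*(q:ℝ)+1) * (B * δt * (1 + x^(2*q))) :=
          Finset.sum_le_sum h1
    _ = (q:ℝ) * ((2*(q:ℝ)+1) * (B * δt * (1 + x^(2*q)))) := by
        rw [Finset.sum_const, Finset.card_range, nsmul_eq_mul]
  have hsum2 : ∑ i ∈ Finset.range (2*q), coef q i * M (2*q-i)
      ≤ (2*(q:ℝ)) * (B * δt * (1 + x^(2*q))) := by
    have h2 := Finset.sum_le_card_nsmul (Finset.range (2*q))
      (fun i => coef q i * M (2*q-i)) (B * δt * (1 + x^(2*q)))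
      (fun i hi => hT q i le_rfl (by have := Finset.mem_range.1 hi; omega)
        (Or.inr (Finset.mem_range.1 hi)))
    rw [Finset.card_range, nsmul_eq_mul] at h2
    calc ∑ i ∈ Finset.range (2*q), coef q i * M (2*q-i)
        ≤ ((2*q:ℕ):ℝ) * (B * δt * (1 + x^(2*q))) := h2
    _ = (2*(q:ℝ)) * (B * δt * (1 + x^(2*q))) := by push_cast; ring
  have htop : coef q (2*q) * M (2*q - 2*q) ≤ x^(2*q) := by
    rw [Nat.sub_self, hM0, mul_one]
    simp only [hcoef, Nat.choose_self, Nat.sub_self, pow_zero, Nat.cast_one, one_mul, mul_one]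
    exact pow_le_pow_left₀ hxc0 (mul_le_of_le_one_right hx hc1) _
  have hexp1 : (N*B+1)*δt + 1 ≤ Real.exp ((N*B+1)*δt) := Real.add_one_le_exp _
  have hmul := mul_le_mul_of_nonneg_right hexp1 hX1
  have hq1 : (q:ℝ) * ((2*(q:ℝ)+1) * (B * δt * (1 + x^(2*q))))
      + (2*(q:ℝ)) * (B * δt * (1 + x^(2*q))) ≤ N * (B * δt * (1 + x^(2*q))) := by
    rw [hN]; nlinarith [hbnd0]
  have hδX : 0 ≤ δt * (1 + x^(2*q)) := mul_nonneg hδt.le hX1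
  nlinarith [hsum1, hsum2, htop, hmul, hq1, hδX]
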